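/- Let p ∈ 𝔽₂[x] be primitive of degree m ≥ 1, written p = x^m − c_1 x^{m−1} − ⋯ − c_{m−1} x − c_m with c_j ∈ 𝔽₂. Let a : ℕ → 𝔽₂ satisfy the linear recurrence a_{i+m} = c_1 a_{i+m−1} + ⋯ + c_m a_i for all i ≥ 0, with initial state (a_0, …, a_{m−1}) ≠ (0, …, 0). Then a is purely periodic and its minimal period is exactly 2^m − 1. -/
import Mathlib


open Polynomial

/-- A polynomial `p ∈ 𝔽₂[x]` of degree `m` is primitive if it is irreducible and
the residue class of `x` in `𝔽₂[x]/(p)` has multiplicative order `2^m - 1`. -/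
def IsPrimitivePoly (p : Polynomial (ZMod 2)) : Prop :=
  Irreducible p ∧ orderOf (AdjoinRoot.root p) = 2 ^ p.natDegree - 1

/-- A linear recurring sequence over `𝔽₂` whose characteristic polynomial
`p = x^m - c_1 x^{m-1} - ⋯ - c_m` is primitive, started from a nonzero initial
state, is purely periodic with minimal period exactly `2^m - 1`. -/
theorem lfsr_minimal_period (m : ℕ) (hm : 1 ≤ m) (c : ℕ → ZMod 2)
    (p : Polynomial (ZMod 2))
    (hp : p = X ^ m - ∑ j ∈ Finset.Icc 1 m, C (c j) * X ^ (m - j))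
    (hprim : IsPrimitivePoly p)
    (a : ℕ → ZMod 2)
    (ha : ∀ i, a (i + m) = ∑ j ∈ Finset.Icc 1 m, c j * a (i + m - j))
    (ha0 : ∃ k, k < m ∧ a k ≠ 0) :
    IsLeast {T : ℕ | 0 < T ∧ ∀ i, a (i + T) = a i} (2 ^ m - 1) := by
  obtain ⟨hirr, hord⟩ := hprim
  -- degree of p
  have hdegq : (∑ j ∈ Finset.Icc 1 m, C (c j) * X ^ (m - j)).degree < (X ^ m : (ZMod 2)[X]).degree := by
    rw [degree_X_pow]
    refine lt_of_le_of_lt (degree_sum_le _ _) ?_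
    rw [Finset.sup_lt_iff (by exact_mod_cast WithBot.bot_lt_coe m)]
    intro j hj
    simp only [Finset.mem_Icc] at hj
    refine lt_of_le_of_lt (degree_C_mul_X_pow_le _ _) ?_
    exact_mod_cast Nat.sub_lt_of_pos_le (by omega) hj.2
  have hdeg : p.degree = m := by
    rw [hp, degree_sub_eq_left_of_degree_lt hdegq, degree_X_pow]
  have hndeg : p.natDegree = m := natDegree_eq_of_degree_eq_some hdeg
  have hp0 : p ≠ 0 := fun h => by rw [h, degree_zero] at hdeg; simp at hdeg
  haveI : Fact (Irreducible p) := ⟨hirr⟩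
  set K := AdjoinRoot p
  set α : K := AdjoinRoot.root p with hα
  rw [hndeg] at hord
  have hpos : 0 < 2 ^ m - 1 := by
    have : 1 < 2 ^ m := Nat.one_lt_two_pow (by omega)
    omega
  -- α^m relation
  have hαm : α ^ m = ∑ j ∈ Finset.Icc 1 m, c j • α ^ (m - j) := by
    have h0 : AdjoinRoot.mk p (X ^ m - ∑ j ∈ Finset.Icc 1 m, C (c j) * X ^ (m - j)) = 0 := by
      rw [← hp]; exact AdjoinRoot.mk_self
    rw [map_sub, map_pow, map_sum, sub_eq_zero] at h0
    rw [AdjoinRoot.mk_X] at h0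
    rw [h0]
    refine Finset.sum_congr rfl fun j _ => ?_
    rw [map_mul, map_pow, AdjoinRoot.mk_X, AdjoinRoot.mk_C, Algebra.smul_def]
    rfl
  -- power basis and linear functional
  let pb := AdjoinRoot.powerBasis hp0
  let L : K →ₗ[ZMod 2] ZMod 2 := pb.basis.constr (ZMod 2) (fun i : Fin pb.dim => a i)
  have hLpow : ∀ k, k < m → L (α ^ k) = a k := by
    intro k hk
    have hdim : pb.dim = m := by rw [AdjoinRoot.powerBasis_dim, hndeg]
    have : α ^ k = pb.basis ⟨k, by omega⟩ := by
      rw [pb.basis_eq_pow]; rfl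
    rw [this, Module.Basis.constr_basis]
  have hL : ∀ i, L (α ^ i) = a i := by
    intro i
    induction i using Nat.strong_induction_on with
    | _ i ih =>
      rcases lt_or_ge i m with h | h
      · exact hLpow i h
      · obtain ⟨i', rfl⟩ : ∃ i', i = i' + m := ⟨i - m, by omega⟩
        rw [pow_add, hαm, Finset.mul_sum]
        rw [show ∀ s : Finset ℕ, (∑ j ∈ s, α ^ i' * c j • α ^ (m - j)) = ∑ j ∈ s, c j • α ^ (i' + (m - j)) from fun s => Finset.sum_congr rfl fun j _ => by rw [mul_smul_comm, pow_add]]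
        rw [map_sum, ha i']
        refine Finset.sum_congr rfl fun j hj => ?_
        simp only [Finset.mem_Icc] at hj
        rw [map_smul, smul_eq_mul, ih (i' + (m - j)) (by omega), show i' + (m - j) = i' + m - j from by omega]
  have hLne : L ≠ 0 := by
    obtain ⟨k, hk, hak⟩ := ha0
    intro h
    exact hak (by rw [← hL k, h]; rfl)
  -- finiteness
  haveI : Module.Finite (ZMod 2) K := Module.Finite.of_basis pb.basis
  haveI : Finite K := Module.finite_of_finite (ZMod 2)
  haveI : Fintype K := Fintype.ofFinite K
  have hcard : Fintype.card K = 2 ^ m := by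
    rw [Module.card_fintype pb.basis, ZMod.card, Fintype.card_fin, AdjoinRoot.powerBasis_dim, hndeg]
  -- α is a unit of full order
  have hα0 : α ≠ 0 := by
    intro h
    have := pow_orderOf_eq_one α
    rw [hord, h, zero_pow (by omega)] at this
    exact zero_ne_one this
  let u : Kˣ := Units.mk0 α hα0
  have hu : orderOf u = 2 ^ m - 1 := by
    rw [← orderOf_units]; exact hord
  have hcardu : Nat.card Kˣ = 2 ^ m - 1 := by
    classical
    rw [Nat.card_eq_fintype_card, Fintype.card_units, hcard]
  have htop : Subgroup.zpowers u = ⊤ := by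
    apply Subgroup.eq_top_of_card_eq
    rw [Nat.card_zpowers, hu, hcardu]
  have hgen : ∀ x : K, x ≠ 0 → ∃ n : ℕ, x = α ^ n := by
    intro x hx
    have : Units.mk0 x hx ∈ Subgroup.zpowers u := htop ▸ Subgroup.mem_top _
    rw [← mem_powers_iff_mem_zpowers] at this
    obtain ⟨n, hn⟩ := this
    refine ⟨n, ?_⟩
    have := congrArg (Units.val) hn
    simpa [u] using this.symm
  constructor
  · refine ⟨hpos, fun i => ?_⟩
    rw [← hL, ← hL i, pow_add, ← hord, pow_orderOf_eq_one, mul_one]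
  · rintro T ⟨hT, hTper⟩
    have hβ : α ^ T = 1 := by
      by_contra hne
      set β := α ^ T - 1 with hβdef
      have hβ0 : β ≠ 0 := sub_ne_zero.mpr hne
      have hzero : ∀ x : K, L (x * β) = 0 := by
        intro x
        rcases eq_or_ne x 0 with rfl | hx
        · simp
        · obtain ⟨n, rfl⟩ := hgen x hx
          rw [hβdef, mul_sub, mul_one, ← pow_add, map_sub, hL, hL, hTper, sub_self]
      apply hLne
      ext y
      have := hzero (y * β⁻¹)
      rwa [mul_assoc, inv_mul_cancel₀ hβ0, mul_one] at this
    have : (2 ^ m - 1) ∣ T := hord ▸ orderOf_dvd_of_pow_eq_one hβ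
    exact Nat.le_of_dvd hT this
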